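/- Let n > 1 be even and k = 1 in characteristic 2. The polynomial f_{n,1}(x) = ∑_{j≥0} C(n−1,2j+1)(x^j + x^{j+1}) ∈ F_2[x] equals ∑_{j=0}^{n/2} C(n+1, 2j+1) x^j (mod 2), and this polynomial is self-reciprocal over F_2. -/

import Mathlib

open Polynomial Finset

lemma fn_even_choose_odd (a m : ℕ) : ((2*a+2).choose (2*m+1) : ZMod 2) = 0 := by
  have h := Nat.add_one_mul_choose_eq (2*a+1) (2*m)
  have h2 : (2:ℕ) ∣ (2*a+2).choose (2*m+1) * (2*m+1) := by
    rw [show ((2*a+2).choose (2*m+1) * (2*m+1)) = (2*a+1).succ * (2*a+1).choose (2*m) from h.symm]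
    exact Dvd.dvd.mul_right ⟨a+1, by omega⟩ _
  have h3 : (2:ℕ) ∣ (2*a+2).choose (2*m+1) := by
    rcases Nat.prime_two.dvd_mul.1 h2 with d | d
    · exact d
    · omega
  exact (ZMod.natCast_eq_zero_iff _ 2).2 h3

lemma fn_key1 (t m : ℕ) : ((2*t+3).choose (m+2) : ZMod 2)
    = (2*t+1).choose (m+2) + (2*t+1).choose m := by
  have e1 : (2*t+3).choose (m+2) = (2*t+2).choose (m+1) + (2*t+2).choose (m+2) :=
    Nat.choose_succ_succ _ _
  have e2 : (2*t+2).choose (m+1) = (2*t+1).choose m + (2*t+1).choose (m+1) :=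
    Nat.choose_succ_succ _ _
  have e3 : (2*t+2).choose (m+2) = (2*t+1).choose (m+1) + (2*t+1).choose (m+2) :=
    Nat.choose_succ_succ _ _
  have h : (2*t+3).choose (m+2)
      = (2*t+1).choose m + 2*((2*t+1).choose (m+1)) + (2*t+1).choose (m+2) := by omega
  rw [h]
  push_cast
  rw [show ((2:ZMod 2)) = 0 by decide]
  ring

lemma fn_step2 (t m : ℕ) : ((2*t+3).choose (2*m) : ZMod 2) = (2*t+3).choose (2*m+1) := by
  have e : (2*t+4).choose (2*m+1) = (2*t+3).choose (2*m) + (2*t+3).choose (2*m+1) :=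
    Nat.choose_succ_succ _ _
  have h0 := fn_even_choose_odd (t+1) m
  rw [show 2*(t+1)+2 = 2*t+4 by ring, e] at h0
  push_cast at h0
  have h1 : ((2*t+3).choose (2*m) : ZMod 2) = -((2*t+3).choose (2*m+1) : ZMod 2) := by
    linear_combination h0
  rw [h1, CharTwo.neg_eq]

lemma fn_key2 (t j : ℕ) (hj : j ≤ t+1) :
    ((2*t+3).choose (2*j+1) : ZMod 2) = (2*t+3).choose (2*(t+1-j)+1) := by
  rw [← fn_step2 t (t+1-j)]
  rw [show 2*(t+1-j) = (2*t+3) - (2*j+1) by omega]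
  rw [Nat.choose_symm (by omega)]

lemma fn_coeffP (t k : ℕ) :
    (∑ j ∈ range (2*t+3),
        ((2*t+1).choose (2*j+1) : Polynomial (ZMod 2)) * (X ^ j + X ^ (j+1))).coeff k
    = ((2*t+3).choose (2*k+1) : ZMod 2) := by
  have vanish : ∀ m : ℕ, t+1 ≤ m → ((2*t+1).choose (2*m+1) : ZMod 2) = 0 := by
    intro m hm
    rw [Nat.choose_eq_zero_of_lt (by omega), Nat.cast_zero]
  rw [finset_sum_coeff]
  simp only [mul_add, coeff_add, coeff_natCast_mul, coeff_X_pow, mul_ite, mul_one, mul_zero]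
  rw [Finset.sum_add_distrib, Finset.sum_ite_eq]
  rcases k with _ | k
  · rw [if_pos (by simp)]
    simp only [show ∀ x : ℕ, (0 = x + 1) = False from fun x => by simp, if_false,
      Finset.sum_const_zero, add_zero]
    rw [Nat.choose_one_right, Nat.choose_one_right]
    push_cast
    have h2 : (2:ZMod 2) = 0 := by decide
    linear_combination -h2
  · simp only [add_left_inj]
    rw [Finset.sum_ite_eq]
    have goal' : ((2*t+1).choose (2*(k+1)+1) : ZMod 2) + (2*t+1).choose (2*k+1)
        = ((2*t+3).choose (2*(k+1)+1) : ZMod 2) := by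
      have := fn_key1 t (2*k+1)
      rw [show 2*k+1+2 = 2*(k+1)+1 by ring] at this
      rw [this]
    by_cases h1 : k + 1 ∈ range (2*t+3)
    · rw [if_pos h1]
      by_cases h2 : k ∈ range (2*t+3)
      · rw [if_pos h2]; exact goal'
      · simp at h1 h2; omega
    · rw [if_neg h1]
      have hz : ((2*t+1).choose (2*(k+1)+1) : ZMod 2) = 0 :=
        vanish (k+1) (by simp only [Finset.mem_range, not_lt] at h1; omega)
      by_cases h2 : k ∈ range (2*t+3)
      · rw [if_pos h2, ← goal', hz]
      · rw [if_neg h2, ← goal', hz,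
          vanish k (by simp only [Finset.mem_range, not_lt] at h2; omega)]

lemma fn_coeffQ (t k : ℕ) :
    (∑ j ∈ range (t+2), ((2*t+3).choose (2*j+1) : Polynomial (ZMod 2)) * X ^ j).coeff k
    = ((2*t+3).choose (2*k+1) : ZMod 2) := by
  rw [finset_sum_coeff]
  simp only [coeff_natCast_mul, coeff_X_pow, mul_ite, mul_one, mul_zero]
  rw [Finset.sum_ite_eq]
  by_cases h : k ∈ range (t+2)
  · rw [if_pos h]
  · rw [if_neg h, Nat.choose_eq_zero_of_lt (by simp only [Finset.mem_range, not_lt] at h; omega),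
      Nat.cast_zero]

lemma fn_part1 (t : ℕ) :
    (∑ j ∈ range (2*t+3), ((2*t+1).choose (2*j+1) : Polynomial (ZMod 2)) * (X ^ j + X ^ (j+1)))
    = ∑ j ∈ range (t+2), ((2*t+3).choose (2*j+1) : Polynomial (ZMod 2)) * X ^ j := by
  ext k
  rw [fn_coeffP, fn_coeffQ]

lemma fn_hdeg (t : ℕ) :
    (∑ j ∈ range (2*t+3),
        ((2*t+1).choose (2*j+1) : Polynomial (ZMod 2)) * (X ^ j + X ^ (j+1))).natDegree
    = t + 1 := by
  apply le_antisymm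
  · rw [natDegree_le_iff_coeff_eq_zero]
    intro N hN
    rw [fn_coeffP, Nat.choose_eq_zero_of_lt (by omega), Nat.cast_zero]
  · apply le_natDegree_of_ne_zero
    rw [fn_coeffP, show 2*(t+1)+1 = 2*t+3 by ring, Nat.choose_self, Nat.cast_one]
    exact one_ne_zero

lemma fn_part2 (t : ℕ) :
    (∑ j ∈ range (2*t+3),
        ((2*t+1).choose (2*j+1) : Polynomial (ZMod 2)) * (X ^ j + X ^ (j+1))).reverse
    = ∑ j ∈ range (2*t+3),
        ((2*t+1).choose (2*j+1) : Polynomial (ZMod 2)) * (X ^ j + X ^ (j+1)) := by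
  ext k
  rw [coeff_reverse, fn_hdeg]
  by_cases h : k ≤ t + 1
  · rw [revAt_le h, fn_coeffP, fn_coeffP, ← fn_key2 t k h]
  · rw [show revAt (t+1) k = k from by
      exact revAt_eq_self_of_lt (by omega)]

theorem fn_char_two_even (n : ℕ) (hn : 1 < n) (hev : Even n) :
    ((∑ j ∈ range (n + 1),
        (Nat.choose (n - 1) (2 * j + 1) : Polynomial (ZMod 2)) * (X ^ j + X ^ (j + 1)))
      = ∑ j ∈ range (n / 2 + 1),
          (Nat.choose (n + 1) (2 * j + 1) : Polynomial (ZMod 2)) * X ^ j)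
    ∧ (∑ j ∈ range (n + 1),
        (Nat.choose (n - 1) (2 * j + 1) : Polynomial (ZMod 2)) * (X ^ j + X ^ (j + 1))).reverse
      = ∑ j ∈ range (n + 1),
          (Nat.choose (n - 1) (2 * j + 1) : Polynomial (ZMod 2)) * (X ^ j + X ^ (j + 1)) := by
  obtain ⟨t, rfl⟩ : ∃ t, n = 2 * t + 2 := by
    obtain ⟨s, hs⟩ := hev
    exact ⟨s - 1, by omega⟩
  simp only [show 2*t+2+1 = 2*t+3 from by ring, show 2*t+2-1 = 2*t+1 from by omega,
    show (2*t+2)/2 + 1 = t+2 from by omega]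
  exact ⟨fn_part1 t, fn_part2 t⟩
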